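/- Under the setup of the inverse-probability-of-censoring weighting, the estimating-function summand has conditional mean zero: E[ 1{Y ≥ t0} ( Δ·1{Y ≤ t0 + exp(Xᵀα0)}·G(t0)/G(Y) − τ ) | X ] = 0. -/

import Mathlib

open MeasureTheory ProbabilityTheory Matrix

/-- The IPCW estimating-function summand has (conditional) mean zero:
`E[ 1{Y ≥ t0} ( Δ·1{Y ≤ t0 + exp(xᵀα0)}·G(t0)/G(Y) − τ ) ] = 0`, where `Y = min(T,C)`,
`Δ = 1{T ≤ C}`, `C` independent of `T` (covariates fixed at `x`) with continuous positive
survival function `G`, and `T` satisfies the quantile residual lifetime identity. -/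
theorem stmt2 {Ω : Type*} [MeasurableSpace Ω] (P : Measure Ω) [IsProbabilityMeasure P]
    {p : ℕ} (x α0 : Fin p → ℝ) (t0 τ : ℝ) (hτ : τ ∈ Set.Ioo (0 : ℝ) 1)
    (T C : Ω → ℝ) (hT : Measurable T) (hC : Measurable C)
    (hindep : ProbabilityTheory.IndepFun T C P)
    (G : ℝ → ℝ) (hG : ∀ t, G t = (P {ω | t ≤ C ω}).toReal)
    (hGpos : ∀ t, t ≤ t0 + Real.exp (x ⬝ᵥ α0) → 0 < G t)
    (hCcont : ∀ t : ℝ, P {ω | C ω = t} = 0)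
    (hQRL : P {ω | t0 ≤ T ω ∧ T ω ≤ t0 + Real.exp (x ⬝ᵥ α0)} =
      ENNReal.ofReal τ * P {ω | t0 ≤ T ω}) :
    (∫ ω, (if t0 ≤ min (T ω) (C ω) then
            (if T ω ≤ C ω ∧ min (T ω) (C ω) ≤ t0 + Real.exp (x ⬝ᵥ α0)
              then G t0 / G (min (T ω) (C ω)) else 0) - τ
          else 0) ∂P) = 0 := by
  set u : ℝ := t0 + Real.exp (x ⬝ᵥ α0) with hu
  have ht0u : t0 ≤ u := by
    have := Real.exp_pos (x ⬝ᵥ α0); linarith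
  have hGnn : ∀ t, 0 ≤ G t := fun t => (hG t) ▸ ENNReal.toReal_nonneg
  have hGanti : Antitone G := by
    intro s t hst
    rw [hG s, hG t]
    exact ENNReal.toReal_le_toReal (measure_ne_top _ _) (measure_ne_top _ _) |>.mpr
      (measure_mono (fun ω h => le_trans hst h))
  have hGm : Measurable G := hGanti.measurable
  set μ : Measure ℝ := P.map T with hμdef
  set ν : Measure ℝ := P.map C with hνdef
  have hμprob : IsProbabilityMeasure μ := Measure.isProbabilityMeasure_map hT.aemeasurable
  have hνprob : IsProbabilityMeasure ν := Measure.isProbabilityMeasure_map hC.aemeasurable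
  have hν_Ici : ∀ t, (ν (Set.Ici t)).toReal = G t := by
    intro t
    rw [hνdef, Measure.map_apply hC measurableSet_Ici, hG t]
    rfl
  set F : ℝ × ℝ → ℝ := fun q =>
    if t0 ≤ min q.1 q.2 then
      (if q.1 ≤ q.2 ∧ min q.1 q.2 ≤ u then G t0 / G (min q.1 q.2) else 0) - τ
    else 0 with hFdef
  have hminm : Measurable fun q : ℝ × ℝ => min q.1 q.2 :=
    measurable_fst.min measurable_snd
  have hFmeas : Measurable F := by
    apply Measurable.ite (measurableSet_le measurable_const hminm)
    · exact (Measurable.ite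
        ((measurableSet_le measurable_fst measurable_snd).inter
          (measurableSet_le hminm measurable_const))
        (measurable_const.div (hGm.comp hminm)) measurable_const).sub measurable_const
    · exact measurable_const
  have hGu : 0 < G u := hGpos u le_rfl
  have hbound : ∀ q, ‖F q‖ ≤ G t0 / G u + 1 := by
    intro q
    rw [Real.norm_eq_abs, hFdef]
    by_cases h1 : t0 ≤ min q.1 q.2
    · simp only [if_pos h1]
      have hτ1 : |τ| ≤ 1 := by
        rw [abs_of_pos hτ.1]; exact hτ.2.le
      refine (abs_sub _ _).trans (add_le_add ?_ hτ1)
      by_cases h2 : q.1 ≤ q.2 ∧ min q.1 q.2 ≤ u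
      · rw [if_pos h2, abs_of_nonneg (div_nonneg (hGnn t0) (hGnn _))]
        exact div_le_div_of_nonneg_left (hGnn t0) hGu (hGanti h2.2)
      · rw [if_neg h2, abs_zero]
        exact div_nonneg (hGnn t0) (hGnn u)
    · simp only [if_neg h1, abs_zero]
      have : 0 ≤ G t0 / G u := div_nonneg (hGnn t0) (hGnn u)
      linarith
  have hmap : P.map (fun ω => (T ω, C ω)) = μ.prod ν :=
    (indepFun_iff_map_prod_eq_prod_map_map hT.aemeasurable hC.aemeasurable).mp hindep
  have key : (∫ ω, F (T ω, C ω) ∂P) = ∫ q, F q ∂(μ.prod ν) := by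
    rw [← hmap]
    exact (integral_map (hT.prodMk hC).aemeasurable hFmeas.aestronglyMeasurable).symm
  have hFint : Integrable F (μ.prod ν) :=
    ⟨hFmeas.aestronglyMeasurable,
      HasFiniteIntegral.of_bounded (C := G t0 / G u + 1) (ae_of_all _ hbound)⟩
  have hinner : ∀ t : ℝ, (∫ c, F (t, c) ∂ν) =
      (if t0 ≤ t ∧ t ≤ u then G t0 else 0) - (if t0 ≤ t then τ * G t0 else 0) := by
    intro t
    by_cases h1 : t0 ≤ t
    · have hF_eq : (fun c => F (t, c)) = fun c =>
          (Set.indicator (Set.Ici t) (fun _ => (if t ≤ u then G t0 / G t else 0)) c) -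
          (Set.indicator (Set.Ici t0) (fun _ => τ) c) := by
        funext c
        rw [Set.indicator_apply, Set.indicator_apply]
        simp only [Set.mem_Ici, hFdef]
        by_cases h3 : t ≤ c
        · have hmin : min t c = t := min_eq_left h3
          have h2 : t0 ≤ c := le_trans h1 h3
          rw [hmin]
          simp [h1, h2, h3]
        · have hmin : min t c = c := min_eq_right (le_of_not_ge h3)
          rw [hmin]
          by_cases h2 : t0 ≤ c
          · simp [h1, h2, h3]
          · have : ¬ t0 ≤ min t c := by rw [hmin]; exact h2
            simp [h2, h3, hmin]
      rw [hF_eq, integral_sub ((integrable_const _).indicator measurableSet_Ici)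
        ((integrable_const _).indicator measurableSet_Ici),
        integral_indicator_const _ measurableSet_Ici,
        integral_indicator_const _ measurableSet_Ici, measureReal_def, measureReal_def, hν_Ici, hν_Ici,
        smul_eq_mul, smul_eq_mul]
      by_cases h4 : t ≤ u
      · have hGt : G t ≠ 0 := ne_of_gt (hGpos t h4)
        rw [if_pos h4, if_pos ⟨h1, h4⟩, if_pos h1]
        rw [mul_comm (G t), div_mul_cancel₀ _ hGt, mul_comm τ (G t0), mul_comm (G t0) τ]
      · rw [if_neg h4, if_neg (fun h => h4 h.2), if_pos h1]
        ring
    · have hzero : ∀ c, F (t, c) = 0 := by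
        intro c
        rw [hFdef]
        exact if_neg (fun h => h1 (le_trans h (min_le_left _ _)))
      simp only [hzero, integral_zero, if_neg h1, if_neg (fun h : t0 ≤ t ∧ t ≤ u => h1 h.1)]
      ring
  have houter : (∫ t, ((if t0 ≤ t ∧ t ≤ u then G t0 else 0) -
      (if t0 ≤ t then τ * G t0 else 0)) ∂μ) =
      (μ (Set.Icc t0 u)).toReal * G t0 - (μ (Set.Ici t0)).toReal * (τ * G t0) := by
    have hH_eq : (fun t => ((if t0 ≤ t ∧ t ≤ u then G t0 else 0) -
        (if t0 ≤ t then τ * G t0 else 0))) = fun t =>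
        (Set.indicator (Set.Icc t0 u) (fun _ => G t0) t) -
        (Set.indicator (Set.Ici t0) (fun _ => τ * G t0) t) := by
      funext t
      rw [Set.indicator_apply, Set.indicator_apply]
      rfl
    rw [hH_eq, integral_sub ((integrable_const _).indicator measurableSet_Icc)
      ((integrable_const _).indicator measurableSet_Ici),
      integral_indicator_const _ measurableSet_Icc,
      integral_indicator_const _ measurableSet_Ici, smul_eq_mul, smul_eq_mul]
    rfl
  have hμIcc : μ (Set.Icc t0 u) = P {ω | t0 ≤ T ω ∧ T ω ≤ u} := by
    rw [hμdef, Measure.map_apply hT measurableSet_Icc]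
    rfl
  have hμIci : μ (Set.Ici t0) = P {ω | t0 ≤ T ω} := by
    rw [hμdef, Measure.map_apply hT measurableSet_Ici]
    rfl
  calc (∫ ω, (if t0 ≤ min (T ω) (C ω) then
            (if T ω ≤ C ω ∧ min (T ω) (C ω) ≤ u
              then G t0 / G (min (T ω) (C ω)) else 0) - τ
          else 0) ∂P)
      = ∫ q, F q ∂(μ.prod ν) := key
    _ = ∫ t, ∫ c, F (t, c) ∂ν ∂μ := integral_prod F hFint
    _ = ∫ t, ((if t0 ≤ t ∧ t ≤ u then G t0 else 0) -
          (if t0 ≤ t then τ * G t0 else 0)) ∂μ := by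
        exact integral_congr_ae (ae_of_all _ hinner)
    _ = (μ (Set.Icc t0 u)).toReal * G t0 - (μ (Set.Ici t0)).toReal * (τ * G t0) := houter
    _ = 0 := by
        rw [hμIcc, hμIci, hQRL, ENNReal.toReal_mul, ENNReal.toReal_ofReal hτ.1.le]
        ring
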